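/- The following two statements are equivalent: (C4) for every digraph D there is a non-zero weight vector w with S_D·w ≤ 𝟎; (C5) for every digraph D there is a real vector v with at least one positive component such that S_D·v ≤ 𝟎. -/

import Mathlib

open Matrix

/-- A digraph whose underlying graph is simple: a finite vertex set with an
irreflexive arc relation having no pair of opposite arcs. -/
structure SimpleDigraph (V : Type) where
  Adj : V → V → Prop
  loopless : ∀ v, ¬ Adj v v
  no_opposite : ∀ u v, Adj u v → ¬ Adj v u

namespace SimpleDigraph

variable {V : Type}

/-- `D.DistTwo u v` says that `v` is at out-distance exactly `2` from `u`,
i.e. the shortest directed path from `u` to `v` has length `2`. -/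
def DistTwo (D : SimpleDigraph V) (u v : V) : Prop :=
  u ≠ v ∧ ¬ D.Adj u v ∧ ∃ w, D.Adj u w ∧ D.Adj w v

open Classical in
/-- The second-neighborhood matrix of a digraph: the `(i,j)` entry is `1` if
`d(i,j) = 1`, `-1` if `d(i,j) = 2`, and `0` otherwise. -/
noncomputable def sMatrix (D : SimpleDigraph V) : Matrix V V ℝ :=
  Matrix.of fun i j => if D.Adj i j then 1 else if D.DistTwo i j then -1 else 0

/-- `d⁺(v)`, the number of vertices at out-distance `1` from `v`. -/
noncomputable def outDeg (D : SimpleDigraph V) (v : V) : ℕ :=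
  Nat.card {u : V // D.Adj v u}

/-- `d⁺⁺(v)`, the number of vertices at out-distance `2` from `v`. -/
noncomputable def outDeg2 (D : SimpleDigraph V) (v : V) : ℕ :=
  Nat.card {u : V // D.DistTwo v u}

/-- `d⁻(v)`, the number of vertices at in-distance `1` from `v`. -/
noncomputable def inDeg (D : SimpleDigraph V) (v : V) : ℕ :=
  Nat.card {u : V // D.Adj u v}

/-- `d⁻⁻(v)`, the number of vertices at in-distance `2` from `v`. -/
noncomputable def inDeg2 (D : SimpleDigraph V) (v : V) : ℕ :=
  Nat.card {u : V // D.DistTwo u v}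

/-- The number of arcs of a digraph. -/
noncomputable def numArcs (D : SimpleDigraph V) : ℕ :=
  Nat.card {p : V × V // D.Adj p.1 p.2}

end SimpleDigraph


/-- Conjecture C4: for every digraph `D` there is a non-zero weight vector `w`
with `S_D · w ≤ 𝟎`. -/
def ConjC4 : Prop :=
  ∀ (n : ℕ), 0 < n → ∀ D : SimpleDigraph (Fin n),
    ∃ w : Fin n → ℝ, (∀ i, 0 ≤ w i) ∧ w ≠ 0 ∧ D.sMatrix *ᵥ w ≤ 0

/-- Conjecture C5: for every digraph `D` there is a real vector `v` with at least
one positive component such that `S_D · v ≤ 𝟎`. -/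
def ConjC5 : Prop :=
  ∀ (n : ℕ), 0 < n → ∀ D : SimpleDigraph (Fin n),
    ∃ v : Fin n → ℝ, (∃ i, 0 < v i) ∧ D.sMatrix *ᵥ v ≤ 0

section C4C5Aux

open SimpleDigraph

/-- The digraph obtained from `D` by deleting the vertex `z`. -/
private def delVert {m : ℕ} (D : SimpleDigraph (Fin (m + 1))) (z : Fin (m + 1)) :
    SimpleDigraph (Fin m) where
  Adj a b := D.Adj (z.succAbove a) (z.succAbove b)
  loopless _ h := D.loopless _ h
  no_opposite _ _ h h' := D.no_opposite _ _ h h'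

private lemma delVert_distTwo {m : ℕ} (D : SimpleDigraph (Fin (m + 1))) (z : Fin (m + 1))
    {a b : Fin m} (h : (delVert D z).DistTwo a b) :
    D.DistTwo (z.succAbove a) (z.succAbove b) := by
  obtain ⟨hne, hnadj, c, h1, h2⟩ := h
  exact ⟨fun hh => hne (Fin.succAbove_right_injective hh), hnadj, z.succAbove c, h1, h2⟩

/-- Entries of the second-neighborhood matrix only increase under vertex deletion. -/
private lemma delVert_entry_le {m : ℕ} (D : SimpleDigraph (Fin (m + 1))) (z : Fin (m + 1))
    (a b : Fin m) :
    D.sMatrix (z.succAbove a) (z.succAbove b) ≤ (delVert D z).sMatrix a b := by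
  simp only [SimpleDigraph.sMatrix, Matrix.of_apply]
  by_cases hadj : D.Adj (z.succAbove a) (z.succAbove b)
  · rw [if_pos hadj, if_pos (show (delVert D z).Adj a b from hadj)]
  · rw [if_neg hadj, if_neg (show ¬ (delVert D z).Adj a b from hadj)]
    by_cases hd2 : (delVert D z).DistTwo a b
    · rw [if_pos hd2, if_pos (delVert_distTwo D z hd2)]
    · rw [if_neg hd2]
      by_cases hd2' : D.DistTwo (z.succAbove a) (z.succAbove b)
      · rw [if_pos hd2']; norm_num
      · rw [if_neg hd2']

/-- The "positive part" trick for matrices with nonpositive off-diagonal entries: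
if `N *ᵥ x ≤ 0` then also `N *ᵥ x⁺ ≤ 0`. -/
private lemma zmatrix_posPart {k : ℕ} (N : Matrix (Fin k) (Fin k) ℝ)
    (hoff : ∀ i j, i ≠ j → N i j ≤ 0) (x : Fin k → ℝ) (hx : N *ᵥ x ≤ 0) :
    N *ᵥ (fun i => max (x i) 0) ≤ 0 := by
  intro i
  show ∑ j, N i j * max (x j) 0 ≤ (0 : Fin k → ℝ) i
  rw [Pi.zero_apply]
  by_cases hxi : 0 < x i
  · have hle : ∀ j ∈ Finset.univ, N i j * max (x j) 0 ≤ N i j * x j := by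
      intro j _
      rcases eq_or_ne j i with rfl | hji
      · rw [max_eq_left hxi.le]
      · exact mul_le_mul_of_nonpos_left (le_max_left _ _) (hoff i j (Ne.symm hji))
    calc ∑ j, N i j * max (x j) 0 ≤ ∑ j, N i j * x j := Finset.sum_le_sum hle
      _ = (N *ᵥ x) i := rfl
      _ ≤ 0 := by simpa using hx i
  · apply Finset.sum_nonpos
    intro j _
    rcases eq_or_ne j i with rfl | hji
    · rw [max_eq_right (not_lt.mp hxi)]; simp
    · exact mul_nonpos_iff.mpr (Or.inr ⟨hoff i j (Ne.symm hji), le_max_right _ _⟩)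

end C4C5Aux

private lemma c5_imp_c4 (h5 : ConjC5) : ConjC4 := by
  intro n
  induction n using Nat.strong_induction_on with
  | _ n IH =>
    intro hn D
    rcases n with _ | m
    · omega
    rcases Nat.eq_zero_or_pos m with rfl | hm
    · -- base case: a single vertex
      refine ⟨fun _ => 1, fun _ => zero_le_one, ?_, ?_⟩
      · intro h
        have := congrFun h 0
        norm_num at this
      · intro i
        have hz : ∀ j, D.sMatrix i j = 0 := by
          intro j
          have hij : i = j := by omega
          subst hij
          simp only [SimpleDigraph.sMatrix, Matrix.of_apply]
          rw [if_neg (D.loopless i), if_neg (fun h : D.DistTwo i i => h.1 rfl)]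
        show ∑ j, D.sMatrix i j * 1 ≤ (0 : Fin 1 → ℝ) i
        simp [hz]
    -- inductive step: n = m + 1 with 0 < m
    · -- witnesses for each vertex deletion
      have hwit : ∀ z : Fin (m + 1), ∃ w : Fin (m + 1) → ℝ,
          (∀ i, 0 ≤ w i) ∧ w ≠ 0 ∧ (∀ i, i ≠ z → (D.sMatrix *ᵥ w) i ≤ 0) := by
        intro z
        obtain ⟨w', hw0, hwne, hwle⟩ := IH m (by omega) hm (delVert D z)
        refine ⟨Fin.insertNth (α := fun _ => ℝ) z 0 w', ?_, ?_, ?_⟩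
        · intro i
          rcases eq_or_ne i z with rfl | hiz
          · rw [Fin.insertNth_apply_same]
          · obtain ⟨a, ha⟩ := Fin.exists_succAbove_eq hiz
            rw [← ha, Fin.insertNth_apply_succAbove]
            exact hw0 a
        · intro h
          obtain ⟨a, ha⟩ := Function.ne_iff.mp hwne
          have := congrFun h (z.succAbove a)
          rw [Fin.insertNth_apply_succAbove] at this
          exact ha (by simpa using this)
        · intro i hiz
          obtain ⟨a₀, ha₀⟩ := Fin.exists_succAbove_eq hiz
          have expand : (D.sMatrix *ᵥ Fin.insertNth (α := fun _ => ℝ) z 0 w') i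
              = ∑ a, D.sMatrix i (z.succAbove a) * w' a := by
            show ∑ j, D.sMatrix i j * Fin.insertNth (α := fun _ => ℝ) z 0 w' j = _
            rw [Fin.sum_univ_succAbove
              (fun j => D.sMatrix i j * Fin.insertNth (α := fun _ => ℝ) z 0 w' j) z]
            simp [Fin.insertNth_apply_same, Fin.insertNth_apply_succAbove]
          rw [expand, ← ha₀]
          calc ∑ a, D.sMatrix (z.succAbove a₀) (z.succAbove a) * w' a
              ≤ ∑ a, (delVert D z).sMatrix a₀ a * w' a := by
                apply Finset.sum_le_sum
                intro a _
                exact mul_le_mul_of_nonneg_right (delVert_entry_le D z a₀ a) (hw0 a)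
            _ = ((delVert D z).sMatrix *ᵥ w') a₀ := rfl
            _ ≤ 0 := by simpa using hwle a₀
      choose wv hwv0 hwvne hwvrow using hwit
      -- the matrix whose columns are the deletion witnesses
      set W : Matrix (Fin (m + 1)) (Fin (m + 1)) ℝ := Matrix.of (fun i z => wv z i) with hW
      set N : Matrix (Fin (m + 1)) (Fin (m + 1)) ℝ := D.sMatrix * W with hN
      have hNapp : ∀ i z, N i z = (D.sMatrix *ᵥ wv z) i := by
        intro i z
        rw [hN, Matrix.mul_apply]
        rfl
      have hNoff : ∀ i z, i ≠ z → N i z ≤ 0 := by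
        intro i z hiz
        rw [hNapp]
        exact hwvrow z i hiz
      by_cases hex : ∃ lam : Fin (m + 1) → ℝ, (∀ z, 0 ≤ lam z) ∧ lam ≠ 0 ∧ N *ᵥ lam ≤ 0
      · -- combine the witnesses
        obtain ⟨lam, hl0, hlne, hlle⟩ := hex
        refine ⟨W *ᵥ lam, ?_, ?_, ?_⟩
        · intro i
          show (0:ℝ) ≤ ∑ z, W i z * lam z
          apply Finset.sum_nonneg
          intro z _
          exact mul_nonneg (hwv0 z i) (hl0 z)
        · obtain ⟨z₀, hz₀⟩ := Function.ne_iff.mp hlne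
          have hz₀' : 0 < lam z₀ := lt_of_le_of_ne (hl0 z₀) (by simpa using (Ne.symm hz₀))
          obtain ⟨i₁, hi₁⟩ := Function.ne_iff.mp (hwvne z₀)
          have hi₁' : 0 < wv z₀ i₁ := lt_of_le_of_ne (hwv0 z₀ i₁) (by simpa using (Ne.symm hi₁))
          have hpos : 0 < (W *ᵥ lam) i₁ := by
            have hsum : W i₁ z₀ * lam z₀ ≤ ∑ z, W i₁ z * lam z :=
              Finset.single_le_sum (f := fun z => W i₁ z * lam z)
                (fun z _ => mul_nonneg (hwv0 z i₁) (hl0 z)) (Finset.mem_univ z₀)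
            have : (0:ℝ) < W i₁ z₀ * lam z₀ := mul_pos hi₁' hz₀'
            calc (0:ℝ) < W i₁ z₀ * lam z₀ := this
              _ ≤ ∑ z, W i₁ z * lam z := hsum
              _ = (W *ᵥ lam) i₁ := rfl
          intro h
          have := congrFun h i₁
          rw [this] at hpos
          norm_num at hpos
        · rw [Matrix.mulVec_mulVec, ← hN]
          exact hlle
      · -- no nonnegative combination: derive a contradiction with C5
        exfalso
        have mono : ∀ x : Fin (m + 1) → ℝ, N *ᵥ x ≤ 0 → x ≤ 0 := by
          intro x hx
          by_contra hcon
          rw [Pi.le_def] at hcon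
          push_neg at hcon
          obtain ⟨i₀, hi₀⟩ := hcon
          rw [Pi.zero_apply] at hi₀
          apply hex
          refine ⟨fun i => max (x i) 0, fun i => le_max_right _ _, ?_,
            zmatrix_posPart N hNoff x hx⟩
          intro h
          have h1 := congrFun h i₀
          rw [Pi.zero_apply] at h1
          have h2 : x i₀ ≤ max (x i₀) 0 := le_max_left _ _
          rw [h1] at h2
          exact absurd (lt_of_lt_of_le hi₀ h2) (lt_irrefl 0)
        have hinj : Function.Injective N.mulVecLin := by
          intro x y hxy
          have hsub : N *ᵥ (x - y) = 0 := by
            rw [Matrix.mulVec_sub]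
            rw [show N *ᵥ x = N *ᵥ y from hxy]
            exact sub_self _
          have h1 : x - y ≤ 0 := mono _ (le_of_eq hsub)
          have h2 : y - x ≤ 0 := by
            apply mono
            rw [Matrix.mulVec_sub]
            rw [show N *ᵥ x = N *ᵥ y from hxy]
            simp
          have hxy1 : x ≤ y := by
            intro i
            have := h1 i
            simp only [Pi.sub_apply, Pi.zero_apply, sub_nonpos] at this
            exact this
          have hxy2 : y ≤ x := by
            intro i
            have := h2 i
            simp only [Pi.sub_apply, Pi.zero_apply, sub_nonpos] at this
            exact this
          exact le_antisymm hxy1 hxy2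
        have hsurj : Function.Surjective N.mulVecLin :=
          LinearMap.injective_iff_surjective.mp hinj
        -- build a nonnegative right inverse of N
        choose p hp using fun j : Fin (m + 1) =>
          hsurj (-(Pi.single (M := fun _ => ℝ) j 1))
        have hp' : ∀ j, N *ᵥ p j = -(Pi.single (M := fun _ => ℝ) j 1) := hp
        have hpnonpos : ∀ j, p j ≤ 0 := by
          intro j
          apply mono
          rw [hp' j]
          intro i
          simp only [Pi.neg_apply, Pi.zero_apply, neg_nonpos]
          rcases eq_or_ne i j with rfl | hij
          · simp
          · rw [Pi.single_apply, if_neg hij]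
        set X : Matrix (Fin (m + 1)) (Fin (m + 1)) ℝ := Matrix.of (fun i j => -(p j i)) with hX
        have hX0 : ∀ i j, 0 ≤ X i j := by
          intro i j
          have := hpnonpos j i
          rw [Pi.zero_apply] at this
          simpa [hX] using this
        have hNX : N * X = 1 := by
          ext i j
          rw [Matrix.mul_apply, Matrix.one_apply]
          have hterm : ∀ k, N i k * X k j = -(N i k * p j k) := by
            intro k
            show N i k * (-(p j k)) = _
            ring
          rw [Finset.sum_congr rfl (fun k _ => hterm k)]
          rw [Finset.sum_neg_distrib]
          have : ∑ k, N i k * p j k = (N *ᵥ p j) i := rfl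
          rw [this, hp' j]
          simp only [Pi.neg_apply, neg_neg]
          rw [Pi.single_apply]
        have hSY : D.sMatrix * (W * X) = 1 := by
          rw [← Matrix.mul_assoc, ← hN, hNX]
        have hYS : (W * X) * D.sMatrix = 1 := mul_eq_one_comm.mp hSY
        have hY0 : ∀ i j, 0 ≤ (W * X) i j := by
          intro i j
          rw [Matrix.mul_apply]
          apply Finset.sum_nonneg
          intro k _
          exact mul_nonneg (hwv0 k i) (hX0 k j)
        -- apply C5 to D itself
        obtain ⟨v, ⟨i₀, hi₀⟩, hvle⟩ := h5 (m + 1) (by omega) D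
        have hv : v = (W * X) *ᵥ (D.sMatrix *ᵥ v) := by
          rw [Matrix.mulVec_mulVec, hYS, Matrix.one_mulVec]
        have : v i₀ ≤ 0 := by
          rw [hv]
          show ∑ j, (W * X) i₀ j * (D.sMatrix *ᵥ v) j ≤ 0
          apply Finset.sum_nonpos
          intro j _
          exact mul_nonpos_iff.mpr (Or.inl ⟨hY0 i₀ j, by simpa using hvle j⟩)
        exact absurd (lt_of_lt_of_le hi₀ this) (lt_irrefl 0)

/-- Conjectures C4 and C5 are equivalent. -/
theorem conjC4_iff_conjC5 : ConjC4 ↔ ConjC5 := by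
  constructor
  · intro h4 n hn D
    obtain ⟨w, hw0, hwne, hwle⟩ := h4 n hn D
    obtain ⟨i, hi⟩ := Function.ne_iff.mp hwne
    exact ⟨w, ⟨i, lt_of_le_of_ne (hw0 i) (by simpa using (Ne.symm hi))⟩, hwle⟩
  · exact c5_imp_c4
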